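/- arXiv:math/0411375 — 6 statements merged into one kernel-verified Lean document; each statement's English description precedes it below -/
import Mathlib

section
/- For every integer m ≥ 1 and every A ∈ SL(2,ℝ), the set of holomorphic functions δ : ℍ → ℂ such that δ(z)^m · (denom A z)² = 1 for all z ∈ ℍ has exactly m elements (i.e. its Nat.card equals m). (This is the fiberwise content of Proposition 2.2: the projection from the model of the m-fold covering group G_m of PSL(2,ℝ) to PSL(2,ℝ) is an m-fold covering.) -/
open scoped MatrixGroups Manifold UpperHalfPlane

/-- The Möbius cocycle `denom A z = c z + d` for `A = [[a,b],[c,d]] ∈ SL(2,ℝ)` and `z ∈ ℍ`. -/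
noncomputable def mdenom (A : Matrix.SpecialLinearGroup (Fin 2) ℝ) (z : ℍ) : ℂ :=
  ((A 1 0 : ℝ) : ℂ) * (z : ℂ) + ((A 1 1 : ℝ) : ℂ)

lemma mdenom_ne_zero (A : Matrix.SpecialLinearGroup (Fin 2) ℝ) (z : ℍ) : mdenom A z ≠ 0 := by
  intro h
  rcases eq_or_ne ((A 1 0 : ℝ)) 0 with hc | hc
  · have hd : ((A 1 1 : ℝ)) = 0 := by
      have := h
      rw [mdenom, hc] at this
      simpa using this
    have hdet := A.2
    rw [Matrix.det_fin_two] at hdet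
    rw [hc, hd] at hdet
    simp at hdet
  · have him := congrArg Complex.im h
    simp [mdenom, Complex.add_im, Complex.mul_im] at him
    rcases him with h1 | h2
    · exact hc h1
    · exact z.im_ne_zero (by simpa using h2)

lemma mdiff_const_mul {f : ℍ → ℂ} (hf : MDifferentiable 𝓘(ℂ) 𝓘(ℂ) f) (a : ℂ) :
    MDifferentiable 𝓘(ℂ) 𝓘(ℂ) (fun z => a * f z) := by
  rw [UpperHalfPlane.mdifferentiable_iff] at hf ⊢
  exact hf.const_mul a

/-- For every integer `m ≥ 1` and every `A ∈ SL(2,ℝ)`, the set of holomorphic functions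
`δ : ℍ → ℂ` with `δ(z)^m · (denom A z)² = 1` for all `z ∈ ℍ` has exactly `m` elements. -/
theorem fiber_card_eq (m : ℕ) (hm : 1 ≤ m) (A : Matrix.SpecialLinearGroup (Fin 2) ℝ) :
    Nat.card {δ : ℍ → ℂ //
      MDifferentiable 𝓘(ℂ) 𝓘(ℂ) δ ∧ ∀ z : ℍ, δ z ^ m * (mdenom A z) ^ 2 = 1} = m := by
  have hm0 : (m : ℂ) ≠ 0 := Nat.cast_ne_zero.mpr (by omega)
  set δ₀ : ℍ → ℂ := fun z => (mdenom A z) ^ ((-2 : ℂ) / m) with hδ₀def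
  have hδ₀_ne : ∀ z, δ₀ z ≠ 0 := by
    intro z h
    rw [hδ₀def, Complex.cpow_eq_zero_iff] at h
    exact mdenom_ne_zero A z h.1
  have hδ₀_pow : ∀ z : ℍ, δ₀ z ^ m * (mdenom A z) ^ 2 = 1 := by
    intro z
    have h0 := mdenom_ne_zero A z
    have h1 : δ₀ z ^ m = (mdenom A z) ^ ((-2 : ℂ)) := by
      rw [hδ₀def, ← Complex.cpow_nat_mul]
      congr 1
      field_simp
    rw [h1, show ((-2 : ℂ)) = -((2 : ℕ) : ℂ) by norm_num, Complex.cpow_neg,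
      Complex.cpow_natCast]
    exact inv_mul_cancel₀ (pow_ne_zero 2 h0)
  have hδ₀_hol : MDifferentiable 𝓘(ℂ) 𝓘(ℂ) δ₀ := by
    rcases eq_or_ne ((A 1 0 : ℝ)) 0 with hc | hc
    · have : δ₀ = fun _ => ((A 1 1 : ℝ) : ℂ) ^ ((-2 : ℂ) / m) := by
        funext z
        simp [hδ₀def, mdenom, hc]
      rw [this]
      exact mdifferentiable_const
    · rw [UpperHalfPlane.mdifferentiable_iff]
      have hF : DifferentiableOn ℂ
          (fun w : ℂ => (((A 1 0 : ℝ) : ℂ) * w + ((A 1 1 : ℝ) : ℂ)) ^ ((-2 : ℂ) / m))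
          {z : ℂ | 0 < z.im} := by
        intro w hw
        have hslit : (((A 1 0 : ℝ) : ℂ) * w + ((A 1 1 : ℝ) : ℂ)) ∈ Complex.slitPlane := by
          rw [Complex.mem_slitPlane_iff]
          right
          simp only [Complex.add_im, Complex.mul_im, Complex.ofReal_im, Complex.ofReal_re,
            zero_mul, add_zero, mul_zero]
          exact mul_ne_zero hc (ne_of_gt hw)
        exact (DifferentiableAt.cpow
          (((differentiableAt_const _).mul differentiableAt_id).add (differentiableAt_const _))
          (differentiableAt_const _) hslit).differentiableWithinAt
      refine hF.congr fun w hw => ?_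
      simp only [Function.comp_apply, hδ₀def, mdenom,
        UpperHalfPlane.ofComplex_apply_of_im_pos hw]
  set S := {δ : ℍ → ℂ //
      MDifferentiable 𝓘(ℂ) 𝓘(ℂ) δ ∧ ∀ z : ℍ, δ z ^ m * (mdenom A z) ^ 2 = 1} with hS
  set z₀ : ℍ := UpperHalfPlane.I with hz₀
  have key : ∀ δ : S, ∀ z : ℍ, δ.1 z / δ₀ z = δ.1 z₀ / δ₀ z₀ := by
    rintro ⟨δ, hδhol, hδpow⟩ z
    set g : ℍ → ℂ := fun z => δ z / δ₀ z with hg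
    have hgpow : ∀ z, g z ^ m = 1 := by
      intro z
      have h1 := hδpow z
      have h2 := hδ₀_pow z
      have hD : (mdenom A z) ^ 2 ≠ 0 := pow_ne_zero 2 (mdenom_ne_zero A z)
      have heq : δ z ^ m = δ₀ z ^ m := by
        have := h1.trans h2.symm
        exact mul_right_cancel₀ hD this
      rw [hg]
      rw [div_pow, heq, div_self (pow_ne_zero m (hδ₀_ne z))]
    have hgcont : Continuous g := by
      exact (hδhol.continuous).div (hδ₀_hol.continuous) hδ₀_ne
    set G : ℍ → ↥(Polynomial.nthRootsFinset m (1 : ℂ)) := fun z =>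
      ⟨g z, (Polynomial.mem_nthRootsFinset hm 1).mpr (hgpow z)⟩ with hG
    have hGcont : Continuous G := hgcont.subtype_mk _
    have hGlc : IsLocallyConstant G := fun s => (isOpen_discrete _).preimage hGcont
    have := hGlc.apply_eq_of_preconnectedSpace z z₀
    simpa [hG, Subtype.ext_iff] using this
  let e : {ζ : ℂ // ζ ^ m = 1} ≃ S :=
    { toFun := fun ζ => ⟨fun z => ζ.1 * δ₀ z, mdiff_const_mul hδ₀_hol ζ.1, by
        intro z
        rw [mul_pow, ζ.2, one_mul]
        exact hδ₀_pow z⟩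
      invFun := fun δ => ⟨δ.1 z₀ / δ₀ z₀, by
        have h1 := δ.2.2 z₀
        have h2 := hδ₀_pow z₀
        have hD : (mdenom A z₀) ^ 2 ≠ 0 := pow_ne_zero 2 (mdenom_ne_zero A z₀)
        have heq : δ.1 z₀ ^ m = δ₀ z₀ ^ m :=
          mul_right_cancel₀ hD (h1.trans h2.symm)
        rw [div_pow, heq, div_self (pow_ne_zero m (hδ₀_ne z₀))]⟩
      left_inv := fun ζ => by
        ext
        simp only
        exact mul_div_cancel_right₀ ζ.1 (hδ₀_ne z₀)
      right_inv := fun δ => by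
        ext z
        simp only
        have := key δ z
        rw [← this]
        exact div_mul_cancel₀ (δ.1 z) (hδ₀_ne z) }
  rw [← Nat.card_congr e]
  have hset : {ζ : ℂ | ζ ^ m = 1} = ↑(Polynomial.nthRootsFinset m (1 : ℂ)) := by
    ext ζ
    simp [Polynomial.mem_nthRootsFinset hm]
  calc Nat.card {ζ : ℂ // ζ ^ m = 1}
      = ({ζ : ℂ | ζ ^ m = 1} : Set ℂ).ncard := Nat.card_coe_set_eq _
    _ = (Polynomial.nthRootsFinset m (1 : ℂ)).card := by rw [hset, Set.ncard_coe_finset]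
    _ = m := (Complex.isPrimitiveRoot_exp m (by omega)).card_nthRootsFinset
end

section
/- Let A, B ∈ SL(2,ℝ) be hyperbolic, i.e. |A 0 0 + A 1 1| > 2 and |B 0 0 + B 1 1| > 2. Suppose there are real numbers p₁ < q₁ < p₂ < q₂ such that p₁ and p₂ are fixed points of the Möbius transformation of A (i.e. (A 1 0)·pᵢ² + (A 1 1 − A 0 0)·pᵢ − A 0 1 = 0 for i = 1,2) and q₁ and q₂ are fixed points of the Möbius transformation of B (i.e. (B 1 0)·qᵢ² + (B 1 1 − B 0 0)·qᵢ − B 0 1 = 0 for i = 1,2); in other words, the axes of A and B intersect. Then the product A·B is hyperbolic: |(A·B) 0 0 + (A·B) 1 1| > 2. (The key geometric step in Corollary 2.9: the product of two hyperbolic elements with distinct intersecting axes is hyperbolic.) -/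
open scoped MatrixGroups

set_option maxHeartbeats 1600000

/-- The product of two hyperbolic elements of `SL(2,ℝ)` whose axes intersect (i.e. whose
pairs of real fixed points interleave on `ℝ`) is hyperbolic. -/
theorem product_of_hyperbolics_with_crossing_axes_is_hyperbolic
    (A B : Matrix.SpecialLinearGroup (Fin 2) ℝ)
    (hA : 2 < |A 0 0 + A 1 1|) (hB : 2 < |B 0 0 + B 1 1|)
    (p₁ q₁ p₂ q₂ : ℝ) (h₁ : p₁ < q₁) (h₂ : q₁ < p₂) (h₃ : p₂ < q₂)
    (hp₁ : A 1 0 * p₁ ^ 2 + (A 1 1 - A 0 0) * p₁ - A 0 1 = 0)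
    (hp₂ : A 1 0 * p₂ ^ 2 + (A 1 1 - A 0 0) * p₂ - A 0 1 = 0)
    (hq₁ : B 1 0 * q₁ ^ 2 + (B 1 1 - B 0 0) * q₁ - B 0 1 = 0)
    (hq₂ : B 1 0 * q₂ ^ 2 + (B 1 1 - B 0 0) * q₂ - B 0 1 = 0) :
    2 < |(A * B) 0 0 + (A * B) 1 1| := by
  set a := A 0 0 with ha
  set b := A 0 1 with hb
  set c := A 1 0 with hc
  set d := A 1 1 with hd
  set e := B 0 0 with he
  set f := B 0 1 with hf
  set g := B 1 0 with hg
  set h := B 1 1 with hh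
  have detA : a * d - b * c = 1 := by
    have := A.2
    rw [Matrix.det_fin_two] at this
    exact this
  have detB : e * h - f * g = 1 := by
    have := B.2
    rw [Matrix.det_fin_two] at this
    exact this
  have hAB0 : (A * B) 0 0 = a * e + b * g := by
    show ((A * B : Matrix.SpecialLinearGroup (Fin 2) ℝ) : Matrix (Fin 2) (Fin 2) ℝ) 0 0 = _
    rw [Matrix.SpecialLinearGroup.coe_mul, Matrix.mul_apply, Fin.sum_univ_two]
  have hAB1 : (A * B) 1 1 = c * f + d * h := by
    show ((A * B : Matrix.SpecialLinearGroup (Fin 2) ℝ) : Matrix (Fin 2) (Fin 2) ℝ) 1 1 = _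
    rw [Matrix.SpecialLinearGroup.coe_mul, Matrix.mul_apply, Fin.sum_univ_two]
  rw [hAB0, hAB1]
  -- rule out c = 0 and g = 0
  have hcne : c ≠ 0 := by
    intro hc0
    rw [hc0] at hp₁ hp₂
    have hda : d = a := by
      have hne : p₁ - p₂ ≠ 0 := ne_of_lt (by linarith)
      have : (d - a) * (p₁ - p₂) = 0 := by linarith [hp₁, hp₂]
      have := mul_eq_zero.mp this
      rcases this with h' | h'
      · linarith
      · exact absurd h' hne
    have hb0 : b = 0 := by
      have := hp₁
      rw [hda] at this
      linarith [this]
    rw [hda, hb0, hc0] at detA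
    have ha1 : a * a = 1 := by linarith
    rw [hda] at hA
    rcases mul_self_eq_one_iff.mp ha1 with h' | h' <;> rw [h'] at hA <;> norm_num at hA
  have hgne : g ≠ 0 := by
    intro hg0
    rw [hg0] at hq₁ hq₂
    have hda : h = e := by
      have hne : q₁ - q₂ ≠ 0 := ne_of_lt (by linarith)
      have : (h - e) * (q₁ - q₂) = 0 := by linarith [hq₁, hq₂]
      rcases mul_eq_zero.mp this with h' | h'
      · linarith
      · exact absurd h' hne
    have hb0 : f = 0 := by
      have := hq₁
      rw [hda] at this
      linarith [this]
    rw [hda, hb0, hg0] at detB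
    have ha1 : e * e = 1 := by linarith
    rw [hda] at hB
    rcases mul_self_eq_one_iff.mp ha1 with h' | h' <;> rw [h'] at hB <;> norm_num at hB
  -- express b, d in terms of a, c, p₁, p₂
  have hdA : d = a - c * (p₁ + p₂) := by
    have hne : p₁ - p₂ ≠ 0 := ne_of_lt (by linarith)
    have key : (d - a + c * (p₁ + p₂)) * (p₁ - p₂) = 0 := by linear_combination hp₁ - hp₂
    rcases mul_eq_zero.mp key with h' | h'
    · linarith
    · exact absurd h' hne
  have hbA : b = -c * (p₁ * p₂) := by linear_combination p₁ * hdA - hp₁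
  have hdB : h = e - g * (q₁ + q₂) := by
    have hne : q₁ - q₂ ≠ 0 := ne_of_lt (by linarith)
    have key : (h - e + g * (q₁ + q₂)) * (q₁ - q₂) = 0 := by linear_combination hq₁ - hq₂
    rcases mul_eq_zero.mp key with h' | h'
    · linarith
    · exact absurd h' hne
  have hbB : f = -g * (q₁ * q₂) := by linear_combination q₁ * hdB - hq₁
  -- eigenvalue quantities
  set α₁ := a - c * p₁ with hα₁
  set α₂ := a - c * p₂ with hα₂
  set β₁ := e - g * q₁ with hβ₁
  set β₂ := e - g * q₂ with hβ₂
  have hα : α₁ * α₂ = 1 := by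
    have d2 := detA
    rw [hdA, hbA] at d2
    rw [hα₁, hα₂]
    linear_combination d2
  have hβ : β₁ * β₂ = 1 := by
    have d2 := detB
    rw [hdB, hbB] at d2
    rw [hβ₁, hβ₂]
    linear_combination d2
  have hαne : α₁ - α₂ ≠ 0 := by
    rw [hα₁, hα₂]
    intro h'
    have : c * (p₂ - p₁) = 0 := by linarith
    rcases mul_eq_zero.mp this with h'' | h''
    · exact hcne h''
    · linarith
  have hβne : β₁ - β₂ ≠ 0 := by
    rw [hβ₁, hβ₂]
    intro h'
    have : g * (q₂ - q₁) = 0 := by linarith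
    rcases mul_eq_zero.mp this with h'' | h''
    · exact hgne h''
    · linarith
  set X := (p₂ - q₁) * (q₂ - p₁) with hX
  set Y := (q₁ - p₁) * (q₂ - p₂) with hY
  have hXpos : 0 < X := mul_pos (by linarith) (by linarith)
  have hYpos : 0 < Y := mul_pos (by linarith) (by linarith)
  set S₁ := α₁ * β₁ + α₂ * β₂ with hS₁
  set S₂ := α₁ * β₂ + α₂ * β₁ with hS₂
  set T := a * e + b * g + c * f + d * h with hT
  have key : T * (X + Y) = X * S₁ + Y * S₂ := by
    rw [hT, hX, hY, hS₁, hS₂, hα₁, hα₂, hβ₁, hβ₂, hbA, hdA, hbB, hdB]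
    ring
  have hS1sq : S₁ ^ 2 - 4 = (α₁ * β₁ - α₂ * β₂) ^ 2 := by
    rw [hS₁]
    linear_combination (4 * β₁ * β₂) * hα + 4 * hβ
  have hS2sq : S₂ ^ 2 - 4 = (α₁ * β₂ - α₂ * β₁) ^ 2 := by
    rw [hS₂]
    linear_combination (4 * β₁ * β₂) * hα + 4 * hβ
  have hprod : 4 < S₁ * S₂ := by
    have hid : S₁ * S₂ = (α₁ - α₂) ^ 2 + (β₁ - β₂) ^ 2 + 4 := by
      rw [hS₁, hS₂]
      linear_combination (α₁ ^ 2 + α₂ ^ 2 + 2) * hβ + (β₁ ^ 2 + β₂ ^ 2 + 2) * hα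
    have h1 : 0 < (α₁ - α₂) ^ 2 := by positivity
    have h2 : 0 < (β₁ - β₂) ^ 2 := by positivity
    linarith
  have expand : (T ^ 2 - 4) * (X + Y) ^ 2 =
      X ^ 2 * (S₁ ^ 2 - 4) + Y ^ 2 * (S₂ ^ 2 - 4) + 2 * X * Y * (S₁ * S₂ - 4) := by
    linear_combination (T * (X + Y) + X * S₁ + Y * S₂) * key
  have t1 : 0 ≤ X ^ 2 * (S₁ ^ 2 - 4) := by rw [hS1sq]; positivity
  have t2 : 0 ≤ Y ^ 2 * (S₂ ^ 2 - 4) := by rw [hS2sq]; positivity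
  have t3 : 0 < 2 * X * Y * (S₁ * S₂ - 4) := by
    have : 0 < S₁ * S₂ - 4 := by linarith
    positivity
  have hTsq : 4 < T ^ 2 := by
    by_contra hcon
    push_neg at hcon
    have hle : (T ^ 2 - 4) * (X + Y) ^ 2 ≤ 0 :=
      mul_nonpos_iff.mpr (Or.inr ⟨by linarith, sq_nonneg _⟩)
    linarith
  have hTeq : a * e + b * g + (c * f + d * h) = T := by rw [hT]; ring
  rw [hTeq]
  by_contra hcon
  push_neg at hcon
  have h4 : |T| ^ 2 ≤ 2 ^ 2 := pow_le_pow_left₀ (abs_nonneg T) hcon 2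
  rw [sq_abs] at h4
  norm_num at h4
  linarith
end

section
/- Let X, Y ∈ SL(2,ℝ) with trace X = 0 and trace Y = 0 (so X and Y act on ℍ as rotations by the angle π about their unique fixed points). Suppose X • x = x and Y • y = y for points x, y ∈ ℍ with x ≠ y. Then the product X·Y is hyperbolic: |trace (X·Y)| > 2. (This is the half-turn lemma used in the geometric proof of Corollary 2.9: the product of rotations by π about two distinct points of the hyperbolic plane is a hyperbolic transformation.) -/
open scoped MatrixGroups

lemma half_turn_entries (g : Matrix.SpecialLinearGroup (Fin 2) ℝ)
    (htr : Matrix.trace (g : Matrix (Fin 2) (Fin 2) ℝ) = 0)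
    (z : UpperHalfPlane) (h : g • z = z) :
    g.1 0 0 = g.1 1 0 * z.re ∧ g.1 0 1 = -(g.1 1 0 * (z.re ^ 2 + z.im ^ 2)) ∧
      (g.1 1 0) ^ 2 * z.im ^ 2 = 1 := by
  set a := g.1 0 0 with ha
  set b := g.1 0 1 with hb
  set c := g.1 1 0 with hc
  set d := g.1 1 1 with hd
  have hdet : a * d - b * c = 1 := by
    have := g.2
    rwa [Matrix.det_fin_two] at this
  have htrace : a + d = 0 := by
    rwa [Matrix.trace_fin_two] at htr
  have hcoe : ((g • z : UpperHalfPlane) : ℂ) = (z : ℂ) := by rw [h]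
  rw [UpperHalfPlane.specialLinearGroup_apply] at hcoe
  simp only [UpperHalfPlane.coe_mk, Algebra.algebraMap_self_apply] at hcoe
  have hden : ((c : ℂ) * z + d) ≠ 0 := by
    intro h0
    have him : c * z.im = 0 := by
      have := congrArg Complex.im h0
      simpa using this
    have hc0 : c = 0 := by
      rcases mul_eq_zero.1 him with h' | h'
      · exact h'
      · exact absurd h' z.im_ne_zero
    have hd0 : (d : ℂ) = 0 := by simpa [hc0] using h0
    have hd0' : d = 0 := by exact_mod_cast hd0
    rw [hc0, hd0'] at hdet
    simp at hdet
  rw [div_eq_iff hden] at hcoe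
  have hre := congrArg Complex.re hcoe
  have him := congrArg Complex.im hcoe
  simp only [Complex.add_re, Complex.add_im, Complex.mul_re, Complex.mul_im,
    Complex.ofReal_re, Complex.ofReal_im, UpperHalfPlane.coe_re, UpperHalfPlane.coe_im,
    zero_mul, mul_zero, sub_zero, add_zero, zero_add] at hre him
  set u := z.re
  set v := z.im
  have hv : v ≠ 0 := z.im_ne_zero
  have hd' : d = -a := by linarith
  have h1 : a = c * u := by
    have : a * v = (c * u + d) * v + c * v * u := by linarith [him]
    rw [hd'] at this
    have := mul_right_cancel₀ hv (by linarith : (2 * (c * u)) * v = (2 * a) * v)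
    linarith
  have h2 : b = -(c * (u ^ 2 + v ^ 2)) := by
    have : u * a + b = (u * (c * u) + u * d) - v * (v * c) := by linarith [hre]
    rw [hd', h1] at this
    ring_nf at this ⊢
    linarith
  refine ⟨h1, h2, ?_⟩
  rw [hd', h1, h2] at hdet
  nlinarith [hdet]

/-- The product of two rotations by the angle `π` about distinct points of the hyperbolic
plane is a hyperbolic transformation: if `X, Y ∈ SL(2,ℝ)` have trace `0` and fix distinct
points `x ≠ y` of `ℍ`, then `|trace (X·Y)| > 2`. -/
theorem product_of_half_turns_is_hyperbolic
    (X Y : Matrix.SpecialLinearGroup (Fin 2) ℝ)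
    (hX : Matrix.trace (X : Matrix (Fin 2) (Fin 2) ℝ) = 0)
    (hY : Matrix.trace (Y : Matrix (Fin 2) (Fin 2) ℝ) = 0)
    (x y : UpperHalfPlane) (hxy : x ≠ y)
    (hXx : X • x = x) (hYy : Y • y = y) :
    2 < |Matrix.trace ((X * Y : Matrix.SpecialLinearGroup (Fin 2) ℝ) :
      Matrix (Fin 2) (Fin 2) ℝ)| := by
  set t := Matrix.trace ((X * Y : Matrix.SpecialLinearGroup (Fin 2) ℝ) :
      Matrix (Fin 2) (Fin 2) ℝ) with ht
  obtain ⟨hX1, hX2, hX3⟩ := half_turn_entries X hX x hXx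
  obtain ⟨hY1, hY2, hY3⟩ := half_turn_entries Y hY y hYy
  set u := x.re; set v := x.im; set p := y.re; set q := y.im
  set c := X.1 1 0; set c' := Y.1 1 0
  have hv : 0 < v := x.im_pos
  have hq : 0 < q := y.im_pos
  have hdX : X.1 1 1 = -X.1 0 0 := by
    have := Matrix.trace_fin_two (X : Matrix (Fin 2) (Fin 2) ℝ) ▸ hX
    linarith [this]
  have hdY : Y.1 1 1 = -Y.1 0 0 := by
    have := Matrix.trace_fin_two (Y : Matrix (Fin 2) (Fin 2) ℝ) ▸ hY
    linarith [this]
  set S := (u - p) ^ 2 + v ^ 2 + q ^ 2 with hSdef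
  have htr : t = -(c * c') * S := by
    rw [ht, Matrix.SpecialLinearGroup.coe_mul, Matrix.trace_fin_two]
    simp only [Matrix.mul_apply, Fin.sum_univ_two]
    rw [hX1, hX2, hY1, hY2, hdX, hdY, hX1, hY1]
    ring
  have hne : (u - p) ^ 2 + (v - q) ^ 2 > 0 := by
    rcases eq_or_ne u p with h | h
    · have hvq : v - q ≠ 0 := by
        refine sub_ne_zero.mpr fun hvq => hxy ?_
        apply UpperHalfPlane.ext
        apply Complex.ext <;> simpa [h]
      positivity
    · have hup : u - p ≠ 0 := sub_ne_zero.mpr h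
      positivity
  have hS : 2 * (v * q) < S := by rw [hSdef]; nlinarith
  have h1 : (c * c') ^ 2 * (v * q) ^ 2 = 1 := by linear_combination (c' ^ 2 * q ^ 2) * hX3 + hY3
  have hmul : ((c * c') * S) ^ 2 * (v * q) ^ 2 = S ^ 2 := by linear_combination S ^ 2 * h1
  have hvq0 : 0 < v * q := mul_pos hv hq
  have hstep : 4 * (v * q) ^ 2 < ((c * c') * S) ^ 2 * (v * q) ^ 2 := by
    rw [hmul]; nlinarith [hS, hvq0]
  have h4 : 4 < ((c * c') * S) ^ 2 :=
    lt_of_mul_lt_mul_right hstep (sq_nonneg (v * q))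
  have key : 4 < t ^ 2 := by
    rw [htr, neg_mul, neg_sq]; exact h4
  have h2 : (2 : ℝ) ^ 2 < |t| ^ 2 := by rw [sq_abs]; linarith
  calc (2 : ℝ) < |t| := lt_of_pow_lt_pow_left₀ 2 (abs_nonneg t) h2
end

section
/- Let m ≥ 1 and Z = ZMod m. For every pair (α, β) ∈ Z × Z there exist a permutation σ in the subgroup of Equiv.Perm (Z × Z) generated by {e₁, e₂, n, r} and an element d ∈ Z such that σ (α, β) = (d, 0) and the additive subgroup of Z generated by {d} equals the additive subgroup of Z generated by {α, β}. (This is the reduction step in the proof of Lemma 5.5: using transformations 1a, 1b, 5a, 5b any tuple (α₁, β₁) can be transformed into (gcd(m, α₁, β₁), 0).) -/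
/-- Dehn twist action `e₁(α, β) = (α+β, β)`. -/
def e1 (m : ℕ) : Equiv.Perm (ZMod m × ZMod m) where
  toFun p := (p.1 + p.2, p.2)
  invFun p := (p.1 - p.2, p.2)
  left_inv := by rintro ⟨a, b⟩; simp
  right_inv := by rintro ⟨a, b⟩; simp

/-- Dehn twist action `e₂(α, β) = (α, β+α)`. -/
def e2 (m : ℕ) : Equiv.Perm (ZMod m × ZMod m) where
  toFun p := (p.1, p.2 + p.1)
  invFun p := (p.1, p.2 - p.1)
  left_inv := by rintro ⟨a, b⟩; simp
  right_inv := by rintro ⟨a, b⟩; simp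

/-- Dehn twist action `n(α, β) = (−α, −β)`. -/
def nn (m : ℕ) : Equiv.Perm (ZMod m × ZMod m) where
  toFun p := (-p.1, -p.2)
  invFun p := (-p.1, -p.2)
  left_inv := by rintro ⟨a, b⟩; simp
  right_inv := by rintro ⟨a, b⟩; simp

/-- Dehn twist action `r(α, β) = (−β, α)`. -/
def rr (m : ℕ) : Equiv.Perm (ZMod m × ZMod m) where
  toFun p := (-p.2, p.1)
  invFun p := (p.2, -p.1)
  left_inv := by rintro ⟨a, b⟩; simp
  right_inv := by rintro ⟨a, b⟩; simp

/-- Dehn twist action `f_c(α, β) = (−β, α − c − 1)`. -/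
def ff (m : ℕ) (c : ZMod m) : Equiv.Perm (ZMod m × ZMod m) where
  toFun p := (-p.2, p.1 - c - 1)
  invFun p := (p.2 + c + 1, -p.1)
  left_inv := by rintro ⟨a, b⟩; simp [Prod.ext_iff]; ring
  right_inv := by rintro ⟨a, b⟩; simp [Prod.ext_iff]; ring

lemma e1_zpow (m : ℕ) (k : ℤ) : ∀ p : ZMod m × ZMod m,
    ((e1 m) ^ k) p = (p.1 + k • p.2, p.2) := by
  induction k using Int.induction_on with
  | zero => intro p; simp
  | succ k ih => intro p; rw [zpow_add_one, Equiv.Perm.mul_apply, ih]; simp [e1]; ring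
  | pred k ih =>
      intro p
      rw [zpow_sub_one, Equiv.Perm.mul_apply]
      have h : (e1 m)⁻¹ p = (p.1 - p.2, p.2) := rfl
      rw [h, ih]
      simp [Prod.ext_iff, zsmul_eq_mul]
      ring

lemma pair_closure_eq (m : ℕ) (α β : ZMod m) (q : ℕ) :
    AddSubgroup.closure {-β, α - (q : ZMod m) * β} = AddSubgroup.closure {α, β} := by
  apply le_antisymm <;> rw [AddSubgroup.closure_le] <;>
    simp only [Set.insert_subset_iff, Set.singleton_subset_iff, SetLike.mem_coe]
  · constructor
    · exact neg_mem (AddSubgroup.subset_closure (by simp))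
    · refine sub_mem (AddSubgroup.subset_closure (by simp)) ?_
      have : (q : ZMod m) * β = q • β := by simp
      rw [this]
      exact AddSubgroup.nsmul_mem _ (AddSubgroup.subset_closure (by simp)) q
  · constructor
    · have : α = (α - (q:ZMod m) * β) - q • (-β) := by rw [nsmul_eq_mul]; ring
      rw [this]
      exact sub_mem (AddSubgroup.subset_closure (by simp))
        (AddSubgroup.nsmul_mem _ (AddSubgroup.subset_closure (by simp)) q)
    · have : β = -(-β) := by ring
      rw [this]
      exact neg_mem (AddSubgroup.subset_closure (by simp))

lemma reduction_aux (m : ℕ) [NeZero m] : ∀ n : ℕ, ∀ α β : ZMod m, β.val = n →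
    ∃ σ ∈ Subgroup.closure ({e1 m, e2 m, nn m, rr m} : Set (Equiv.Perm (ZMod m × ZMod m))),
      ∃ d : ZMod m, σ (α, β) = (d, 0) ∧
        AddSubgroup.closure {d} = AddSubgroup.closure {α, β} := by
  intro n
  induction n using Nat.strong_induction_on with
  | _ n ih =>
    intro α β hβ
    rcases eq_or_ne β 0 with rfl | hβ0
    · refine ⟨1, one_mem _, α, rfl, ?_⟩
      apply le_antisymm <;> rw [AddSubgroup.closure_le] <;>
        simp only [Set.insert_subset_iff, Set.singleton_subset_iff, SetLike.mem_coe]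
      · exact AddSubgroup.subset_closure (by simp)
      · exact ⟨AddSubgroup.subset_closure (by simp), zero_mem _⟩
    · have hn0 : n ≠ 0 := by
        rw [← hβ]; simpa [ZMod.val_eq_zero] using hβ0
      set q : ℕ := α.val / β.val with hq
      set r : ℕ := α.val % β.val with hr
      have hrn : r < n := hβ ▸ Nat.mod_lt _ (by omega)
      set γ : ZMod m := α - (q : ZMod m) * β with hγ
      have hcast : γ = (r : ZMod m) := by
        have h1 : α.val = β.val * q + r := (Nat.div_add_mod α.val β.val).symm
        have : ((α.val : ℕ) : ZMod m) = ((β.val * q + r : ℕ) : ZMod m) := by rw [← h1]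
        rw [ZMod.natCast_val, ZMod.cast_id] at this
        push_cast at this
        rw [ZMod.natCast_val, ZMod.cast_id] at this
        rw [hγ, this]; ring
      have hγval : γ.val = r := by
        rw [hcast]
        have hb := ZMod.val_lt β
        exact ZMod.val_cast_of_lt (by omega)
      obtain ⟨σ', hσ', d, hσd, hcl⟩ := ih r hrn (-β) γ hγval
      refine ⟨σ' * (rr m * (e1 m) ^ (-(q:ℤ))), ?_, d, ?_, ?_⟩
      · exact mul_mem hσ' (mul_mem (Subgroup.subset_closure (by simp))
          (zpow_mem (Subgroup.subset_closure (by simp)) _))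
      · have h1 : ((e1 m) ^ (-(q:ℤ))) (α, β) = (γ, β) := by
          rw [e1_zpow]
          simp [hγ, zsmul_eq_mul]
          ring
        have h2 : (rr m) (γ, β) = (-β, γ) := rfl
        simp only [Equiv.Perm.mul_apply, h1, h2, hσd]
      · rw [hcl, hγ, pair_closure_eq]

/-- Using the genus-1 Dehn twist transformations `e₁, e₂, n, r`, any pair `(α, β)` can be
transformed into `(d, 0)` where `d` generates the same additive subgroup of `ℤ/mℤ` as
`{α, β}` (i.e. `d = gcd(m, α, β)`). -/
theorem genus_one_reduction (m : ℕ) (hm : 1 ≤ m) (α β : ZMod m) :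
    ∃ σ ∈ Subgroup.closure ({e1 m, e2 m, nn m, rr m} : Set (Equiv.Perm (ZMod m × ZMod m))),
      ∃ d : ZMod m, σ (α, β) = (d, 0) ∧
        AddSubgroup.closure {d} = AddSubgroup.closure {α, β} := by
  haveI : NeZero m := ⟨by omega⟩
  exact reduction_aux m β.val α β rfl
end

section
/- Let m ≥ 1, Z = ZMod m, k ∈ ℕ and γ : Fin k → Z. For every pair (α, β) ∈ Z × Z there exist a permutation σ in the subgroup of Equiv.Perm (Z × Z) generated by {e₁, e₂, n, r} ∪ {f_{γ i} : i ∈ Fin k} and an element d ∈ Z such that σ (α, β) = (d, 0) and the additive subgroup of Z generated by {d} equals the additive subgroup of Z generated by {α, β} ∪ {γ i + 1 : i ∈ Fin k}. (This is the algebraic core of Lemma 5.5: any tuple (σ(a₁), σ(b₁)) can be transformed by Dehn twists into (δ, 0), where δ = gcd(m, σ(a₁), σ(b₁), σ(c₂)+1, …, σ(cₙ)+1).) -/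
private lemma cl_eq {A : Type*} [AddGroup A] {S T : Set A}
    (h1 : S ⊆ ↑(AddSubgroup.closure T)) (h2 : T ⊆ ↑(AddSubgroup.closure S)) :
    AddSubgroup.closure S = AddSubgroup.closure T :=
  le_antisymm ((AddSubgroup.closure_le _).2 h1) ((AddSubgroup.closure_le _).2 h2)

private lemma e1_inv_pow (m q : ℕ) (α β : ZMod m) :
    ((e1 m)⁻¹ ^ q) (α, β) = (α - q • β, β) := by
  induction q generalizing α with
  | zero => simp
  | succ q ih =>
      rw [pow_succ, Equiv.Perm.mul_apply]
      have h1 : (e1 m)⁻¹ (α, β) = (α - β, β) := rfl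
      rw [h1, ih]
      simp [Prod.ext_iff, succ_nsmul]; ring

private lemma euclid (m : ℕ) [NeZero m] : ∀ n : ℕ, ∀ α β : ZMod m, β.val = n →
    ∃ σ ∈ Subgroup.closure ({e1 m, e2 m, nn m, rr m} : Set (Equiv.Perm (ZMod m × ZMod m))),
      ∃ d : ZMod m, σ (α, β) = (d, 0) ∧
        AddSubgroup.closure ({d} : Set (ZMod m)) = AddSubgroup.closure {α, β} := by
  intro n
  induction n using Nat.strong_induction_on with
  | _ n ih =>
    intro α β hb
    rcases eq_or_ne β 0 with rfl | h0
    · refine ⟨1, Subgroup.one_mem _, α, by simp, cl_eq ?_ ?_⟩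
      · rintro x rfl
        exact AddSubgroup.subset_closure (by simp)
      · rintro x (rfl | rfl)
        · exact AddSubgroup.subset_closure rfl
        · exact (AddSubgroup.closure {α}).zero_mem
    · set b := β.val with hbdef
      have hbpos : 0 < b := Nat.pos_of_ne_zero (fun h => h0 (ZMod.val_eq_zero β |>.mp h))
      set q := α.val / b with hq
      set α' : ZMod m := α - q • β with hα'
      have hcast : α' = ((α.val % b : ℕ) : ZMod m) := by
        have h1 : b * q + α.val % b = α.val := Nat.div_add_mod α.val b
        have h2 : ((α.val : ℕ) : ZMod m) = α := ZMod.natCast_rightInverse α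
        have h3 : ((b : ℕ) : ZMod m) = β := ZMod.natCast_rightInverse β
        have := congrArg (fun t : ℕ => (t : ZMod m)) h1
        push_cast at this
        rw [h2, h3] at this
        rw [hα', nsmul_eq_mul]
        linear_combination -this
      have hval : α'.val = α.val % b := by
        rw [hcast]
        exact ZMod.val_cast_of_lt (lt_trans (Nat.mod_lt _ hbpos) (ZMod.val_lt β))
      have hlt : α'.val < n := hb ▸ hval ▸ Nat.mod_lt _ hbpos
      obtain ⟨σ', hσ', d, hev, hcl⟩ := ih α'.val hlt (-β) α' rfl
      refine ⟨σ' * rr m * (e1 m)⁻¹ ^ q, ?_, d, ?_, ?_⟩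
      · refine Subgroup.mul_mem _ (Subgroup.mul_mem _ hσ' ?_) ?_
        · exact Subgroup.subset_closure (by simp)
        · rw [inv_pow]
          exact Subgroup.inv_mem _ (Subgroup.pow_mem _ (Subgroup.subset_closure (by simp)) q)
      · rw [Equiv.Perm.mul_apply, Equiv.Perm.mul_apply, e1_inv_pow, ← hα']
        have : rr m (α', β) = (-β, α') := rfl
        rw [this, hev]
      · rw [hcl]
        refine cl_eq ?_ ?_
        · rintro x (rfl | rfl)
          · exact AddSubgroup.neg_mem _ (AddSubgroup.subset_closure (by simp))
          · exact AddSubgroup.sub_mem _ (AddSubgroup.subset_closure (by simp))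
              (AddSubgroup.nsmul_mem _ (AddSubgroup.subset_closure (by simp)) q)
        · have hβmem : β ∈ AddSubgroup.closure ({-β, α'} : Set (ZMod m)) := by
            simpa using AddSubgroup.neg_mem _ (AddSubgroup.subset_closure
              (show -β ∈ ({-β, α'} : Set (ZMod m)) by simp))
          intro x hx
          rcases hx with h | h
          · rw [h, show α = α' + q • β by rw [hα']; ring]
            exact AddSubgroup.add_mem _ (AddSubgroup.subset_closure (by simp))
              (AddSubgroup.nsmul_mem _ hβmem q)
          · rw [h]; exact hβmem

private lemma main_aux (m : ℕ) [NeZero m] : ∀ (k : ℕ) (γ : Fin k → ZMod m) (α β : ZMod m),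
    ∃ σ ∈ Subgroup.closure
      (({e1 m, e2 m, nn m, rr m} ∪ Set.range fun i => ff m (γ i)) :
        Set (Equiv.Perm (ZMod m × ZMod m))),
      ∃ d : ZMod m, σ (α, β) = (d, 0) ∧
        AddSubgroup.closure ({d} : Set (ZMod m))
          = AddSubgroup.closure (({α, β} ∪ Set.range fun i => γ i + 1) : Set (ZMod m)) := by
  intro k
  induction k with
  | zero =>
      intro γ α β
      obtain ⟨σ, hσ, d, hev, hcl⟩ := euclid m β.val α β rfl
      refine ⟨σ, Subgroup.closure_mono Set.subset_union_left hσ, d, hev, ?_⟩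
      rw [hcl]
      congr 1
      simp [Set.range_eq_empty]
  | succ k ih =>
      intro γ α β
      obtain ⟨σ₁, hσ₁, d₁, hev₁, hcl₁⟩ := euclid m β.val α β rfl
      obtain ⟨σ₂, hσ₂, d₂, hev₂, hcl₂⟩ := ih (fun i => γ i.succ) (-d₁) (0 - γ 0 - 1)
      set S : Set (Equiv.Perm (ZMod m × ZMod m)) :=
        {e1 m, e2 m, nn m, rr m} ∪ Set.range fun i : Fin (k+1) => ff m (γ i) with hS
      have hsub : ({e1 m, e2 m, nn m, rr m} ∪ Set.range fun i : Fin k => ff m (γ i.succ)) ⊆ S := by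
        apply Set.union_subset_union_right
        rintro x ⟨i, rfl⟩
        exact ⟨i.succ, rfl⟩
      refine ⟨σ₂ * ff m (γ 0) * rr m * σ₁, ?_, d₂, ?_, ?_⟩
      · refine Subgroup.mul_mem _ (Subgroup.mul_mem _ (Subgroup.mul_mem _ ?_ ?_) ?_) ?_
        · exact Subgroup.closure_mono hsub hσ₂
        · exact Subgroup.subset_closure (Or.inr ⟨0, rfl⟩)
        · exact Subgroup.subset_closure (Or.inl (by simp))
        · exact Subgroup.closure_mono Set.subset_union_left hσ₁
      · rw [Equiv.Perm.mul_apply, Equiv.Perm.mul_apply, Equiv.Perm.mul_apply, hev₁]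
        have h1 : rr m (d₁, 0) = (0, d₁) := by simp [rr, Prod.ext_iff]
        have h2 : ff m (γ 0) (0, d₁) = (-d₁, 0 - γ 0 - 1) := rfl
        rw [h1, h2, hev₂]
      · rw [hcl₂]
        have hd₁L : d₁ ∈ AddSubgroup.closure
            (({-d₁, 0 - γ 0 - 1} ∪ Set.range fun i : Fin k => γ i.succ + 1) : Set (ZMod m)) := by
          have hmem : -d₁ ∈ (({-d₁, 0 - γ 0 - 1} ∪ Set.range fun i : Fin k => γ i.succ + 1) : Set (ZMod m)) :=
            Or.inl (Or.inl rfl)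
          simpa using AddSubgroup.neg_mem _ (AddSubgroup.subset_closure hmem)
        have hd₁R : d₁ ∈ AddSubgroup.closure (({α, β} ∪ Set.range fun i : Fin (k+1) => γ i + 1) : Set (ZMod m)) := by
          have : d₁ ∈ AddSubgroup.closure ({α, β} : Set (ZMod m)) :=
            hcl₁ ▸ AddSubgroup.subset_closure rfl
          exact AddSubgroup.closure_mono Set.subset_union_left this
        refine cl_eq ?_ ?_
        · intro x hx
          rcases hx with (h | h) | ⟨i, h⟩
          · rw [h]; exact AddSubgroup.neg_mem _ hd₁R
          · rw [h, show (0 : ZMod m) - γ 0 - 1 = -(γ 0 + 1) by ring]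
            exact AddSubgroup.neg_mem _ (AddSubgroup.subset_closure (Or.inr ⟨0, rfl⟩))
          · have h' : γ i.succ + 1 = x := h
            rw [← h']
            exact AddSubgroup.subset_closure (Or.inr ⟨i.succ, rfl⟩)
        · have hle : AddSubgroup.closure ({α, β} : Set (ZMod m)) ≤ AddSubgroup.closure
              (({-d₁, 0 - γ 0 - 1} ∪ Set.range fun i : Fin k => γ i.succ + 1) : Set (ZMod m)) := by
            rw [← hcl₁]
            exact (AddSubgroup.closure_le _).2 (by simpa using hd₁L)
          intro x hx
          rcases hx with (h | h) | ⟨i, h⟩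
          · rw [h]; exact hle (AddSubgroup.subset_closure (by simp))
          · rw [h]; exact hle (AddSubgroup.subset_closure (by simp))
          · rcases Fin.eq_zero_or_eq_succ i with rfl | ⟨j, rfl⟩
            · have h' : γ 0 + 1 = x := h
              rw [← h', show γ 0 + 1 = -(0 - γ 0 - 1) by ring]
              exact AddSubgroup.neg_mem _ (AddSubgroup.subset_closure (Or.inl (by simp)))
            · have h' : γ j.succ + 1 = x := h
              rw [← h']
              exact AddSubgroup.subset_closure (Or.inr ⟨j, rfl⟩)

/-- The algebraic core of Lemma 5.5: using the genus-1 Dehn twist transformations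
`e₁, e₂, n, r` and `f_{γ i}`, any pair `(α, β)` can be transformed into `(d, 0)` where
`d` generates the same additive subgroup of `ℤ/mℤ` as `{α, β} ∪ {γ i + 1}`
(i.e. `d = gcd(m, α, β, γ 0 + 1, …, γ (k-1) + 1)`). -/
theorem genus_one_normal_form (m : ℕ) (hm : 1 ≤ m) (k : ℕ) (γ : Fin k → ZMod m)
    (α β : ZMod m) :
    ∃ σ ∈ Subgroup.closure
      (({e1 m, e2 m, nn m, rr m} ∪ Set.range fun i => ff m (γ i)) :
        Set (Equiv.Perm (ZMod m × ZMod m))),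
      ∃ d : ZMod m, σ (α, β) = (d, 0) ∧
        AddSubgroup.closure ({d} : Set (ZMod m))
          = AddSubgroup.closure (({α, β} ∪ Set.range fun i => γ i + 1) : Set (ZMod m)) := by
  haveI : NeZero m := ⟨Nat.one_le_iff_ne_zero.mp hm⟩
  exact main_aux m k γ α β
end

section
/- Let m ≥ 1, Z = ZMod m, k ∈ ℕ and γ : Fin k → Z. For every permutation σ in the subgroup of Equiv.Perm (Z × Z) generated by {e₁, e₂, n, r} ∪ {f_{γ i} : i ∈ Fin k} and every (α, β) ∈ Z × Z, writing (α', β') = σ (α, β), the additive subgroup of Z generated by {α', β'} ∪ {γ i + 1 : i ∈ Fin k} equals the additive subgroup of Z generated by {α, β} ∪ {γ i + 1 : i ∈ Fin k}. (This is the invariance claim underlying Definition 5.1 and Theorem 5.3: for genus 1 the Arf invariant δ = gcd(m, σ(a₁), σ(b₁), σ(c₂)+1, …, σ(cₙ)+1) is preserved under all Dehn twists, hence well defined.) -/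
lemma pair_closure_eq_s11 {M : Type*} [AddCommGroup M] (a b c d : M) (T : Set M)
    (h1 : c ∈ AddSubgroup.closure ({a, b} ∪ T))
    (h2 : d ∈ AddSubgroup.closure ({a, b} ∪ T))
    (h3 : a ∈ AddSubgroup.closure ({c, d} ∪ T))
    (h4 : b ∈ AddSubgroup.closure ({c, d} ∪ T)) :
    AddSubgroup.closure ({c, d} ∪ T) = AddSubgroup.closure ({a, b} ∪ T) := by
  apply le_antisymm <;> rw [AddSubgroup.closure_le] <;> rintro x (hx | hx)
  · rcases hx with rfl | rfl
    exacts [h1, h2]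
  · exact AddSubgroup.subset_closure (Or.inr hx)
  · rcases hx with rfl | rfl
    exacts [h3, h4]
  · exact AddSubgroup.subset_closure (Or.inr hx)

/-- The invariance underlying the genus-1 Arf invariant: every permutation in the group
generated by the Dehn twist transformations `e₁, e₂, n, r` and `f_{γ i}` preserves the
additive subgroup of `ℤ/mℤ` generated by `α, β` and the `γ i + 1`, i.e. the invariant
`δ = gcd(m, σ(a₁), σ(b₁), σ(c₂)+1, …, σ(cₙ)+1)` is well defined. -/
theorem genus_one_invariance (m : ℕ) (hm : 1 ≤ m) (k : ℕ) (γ : Fin k → ZMod m) :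
    ∀ σ ∈ Subgroup.closure
      (({e1 m, e2 m, nn m, rr m} ∪ Set.range fun i => ff m (γ i)) :
        Set (Equiv.Perm (ZMod m × ZMod m))),
      ∀ α β : ZMod m,
        AddSubgroup.closure
            (({(σ (α, β)).1, (σ (α, β)).2} ∪ Set.range fun i => γ i + 1) : Set (ZMod m))
          = AddSubgroup.closure
            (({α, β} ∪ Set.range fun i => γ i + 1) : Set (ZMod m)) := by
  set T : Set (ZMod m) := Set.range fun i => γ i + 1 with hT
  have memA : ∀ (α β : ZMod m), α ∈ AddSubgroup.closure ({α, β} ∪ T) := fun α β =>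
    AddSubgroup.subset_closure (Or.inl (Or.inl rfl))
  have memB : ∀ (α β : ZMod m), β ∈ AddSubgroup.closure ({α, β} ∪ T) := fun α β =>
    AddSubgroup.subset_closure (Or.inl (Or.inr rfl))
  intro σ hσ
  induction hσ using Subgroup.closure_induction with
  | one => intro α β; rfl
  | mul x y hx hy ihx ihy =>
    intro α β
    have : (x * y) (α, β) = x ((y (α, β)).1, (y (α, β)).2) := by simp
    rw [this, ihx, ihy]
  | inv x hx ihx =>
    intro α β
    have h := ihx (x⁻¹ (α, β)).1 (x⁻¹ (α, β)).2
    have hx' : x ((x⁻¹ (α, β)).1, (x⁻¹ (α, β)).2) = (α, β) := by simp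
    rw [hx'] at h
    exact h.symm
  | mem g hg =>
    intro α β
    rcases hg with ((rfl | rfl | rfl | rfl) | ⟨i, rfl⟩)
    · -- e1
      show AddSubgroup.closure ({α + β, β} ∪ T) = _
      exact pair_closure_eq_s11 α β _ _ T
        (AddSubgroup.add_mem _ (memA α β) (memB α β)) (memB α β)
        (by have := AddSubgroup.sub_mem _ (memA (α + β) β) (memB (α + β) β)
            simpa using this)
        (memB (α + β) β)
    · show AddSubgroup.closure ({α, β + α} ∪ T) = _
      exact pair_closure_eq_s11 α β _ _ T
        (memA α β) (AddSubgroup.add_mem _ (memB α β) (memA α β))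
        (memA α (β + α))
        (by have := AddSubgroup.sub_mem _ (memB α (β + α)) (memA α (β + α))
            simpa using this)
    · show AddSubgroup.closure ({-α, -β} ∪ T) = _
      exact pair_closure_eq_s11 α β _ _ T
        (AddSubgroup.neg_mem _ (memA α β)) (AddSubgroup.neg_mem _ (memB α β))
        (by have := AddSubgroup.neg_mem _ (memA (-α) (-β)); simpa using this)
        (by have := AddSubgroup.neg_mem _ (memB (-α) (-β)); simpa using this)
    · show AddSubgroup.closure ({-β, α} ∪ T) = _
      exact pair_closure_eq_s11 α β _ _ T
        (AddSubgroup.neg_mem _ (memB α β)) (memA α β)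
        (memB (-β) α)
        (by have := AddSubgroup.neg_mem _ (memA (-β) α); simpa using this)
    · -- ff (γ i)
      have hγ : γ i + 1 ∈ T := ⟨i, rfl⟩
      show AddSubgroup.closure ({-β, α - γ i - 1} ∪ T) = _
      refine pair_closure_eq_s11 α β _ _ T
        (AddSubgroup.neg_mem _ (memB α β))
        ?_ ?_
        (by have := AddSubgroup.neg_mem _ (memA (-β) (α - γ i - 1)); simpa using this)
      · have := AddSubgroup.sub_mem _ (memA α β)
          (AddSubgroup.closure_mono (le_refl _) (AddSubgroup.subset_closure (Or.inr hγ)))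
        · simpa [sub_sub] using this
      · have := AddSubgroup.add_mem _ (memB (-β) (α - γ i - 1))
          (AddSubgroup.subset_closure (Or.inr hγ) :
            γ i + 1 ∈ AddSubgroup.closure ({-β, α - γ i - 1} ∪ T))
        have h2 : α - γ i - 1 + (γ i + 1) = α := by ring
        rwa [h2] at this
end
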